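/- Let A, B be invertible symmetric (n+1)×(n+1) complex matrices such that the polynomial t ↦ det(A − t·B) has n+1 distinct roots λ₀, …, λₙ ∈ ℂ, and for each i let vᵢ ∈ ℂ^{n+1} be a nonzero vector with (A − λᵢB)vᵢ = 0. Then (v₀, …, vₙ) is a basis of ℂ^{n+1}; moreover vᵢᵀAv_j = 0 and vᵢᵀBv_j = 0 for all i ≠ j, and vᵢᵀBvᵢ ≠ 0 and vᵢᵀAvᵢ ≠ 0 for all i. Consequently, if P is the matrix whose columns are v₀, …, vₙ, then P is invertible and both PᵀAP and PᵀBP are diagonal matrices with nonzero diagonal entries, i.e. the two quadrics are simultaneously diagonalized in the frame given by the singular points v₀, …, vₙ of the pencil. -/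

import Mathlib

open Matrix

theorem simultaneous_diagonalization
    (n : ℕ) (A B : Matrix (Fin (n+1)) (Fin (n+1)) ℂ)
    (hAs : A.IsSymm) (hBs : B.IsSymm) (hA : IsUnit A.det) (hB : IsUnit B.det)
    (lam : Fin (n+1) → ℂ) (hinj : Function.Injective lam)
    (hroots : ∀ t : ℂ, (A - t • B).det = 0 ↔ ∃ i, t = lam i)
    (v : Fin (n+1) → Fin (n+1) → ℂ) (hv0 : ∀ i, v i ≠ 0)
    (hv : ∀ i, (A - lam i • B) *ᵥ v i = 0) :
    LinearIndependent ℂ v ∧ Submodule.span ℂ (Set.range v) = ⊤ ∧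
    (∀ i j, i ≠ j → v i ⬝ᵥ (A *ᵥ v j) = 0 ∧ v i ⬝ᵥ (B *ᵥ v j) = 0) ∧
    (∀ i, v i ⬝ᵥ (A *ᵥ v i) ≠ 0 ∧ v i ⬝ᵥ (B *ᵥ v i) ≠ 0) ∧
    IsUnit (Matrix.of fun i j => v j i).det ∧
    ((Matrix.of fun i j => v j i)ᵀ * A * (Matrix.of fun i j => v j i)).IsDiag ∧
    ((Matrix.of fun i j => v j i)ᵀ * B * (Matrix.of fun i j => v j i)).IsDiag ∧
    (∀ i, ((Matrix.of fun i' j => v j i')ᵀ * A * (Matrix.of fun i' j => v j i')) i i ≠ 0) ∧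
    (∀ i, ((Matrix.of fun i' j => v j i')ᵀ * B * (Matrix.of fun i' j => v j i')) i i ≠ 0) := by
  -- A v i = lam i • (B v i)
  have hAv : ∀ i, A *ᵥ v i = lam i • (B *ᵥ v i) := by
    intro i
    have := hv i
    rw [Matrix.sub_mulVec, sub_eq_zero] at this
    simpa [Matrix.smul_mulVec] using this
  -- lam i ≠ 0
  have hlam0 : ∀ i, lam i ≠ 0 := by
    intro i h0
    have : (A - (0:ℂ) • B).det = 0 := (hroots 0).2 ⟨i, h0.symm⟩
    simp at this
    exact hA.ne_zero this
  -- v i are eigenvectors of B⁻¹A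
  have hBu : IsUnit B := (Matrix.isUnit_iff_isUnit_det B).2 hB
  have hEig : ∀ i, (B⁻¹ * A).mulVecLin (v i) = lam i • v i := by
    intro i
    have : B⁻¹ *ᵥ (A *ᵥ v i) = B⁻¹ *ᵥ (lam i • (B *ᵥ v i)) := by rw [hAv i]
    rw [Matrix.mulVec_smul, Matrix.mulVec_mulVec, Matrix.mulVec_mulVec,
      Matrix.nonsing_inv_mul B hB, Matrix.one_mulVec] at this
    simpa [Matrix.mulVecLin_apply] using this
  have hli : LinearIndependent ℂ v := by
    apply Module.End.eigenvectors_linearIndependent' ((B⁻¹ * A).mulVecLin) lam hinj v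
    intro i
    constructor
    · rw [Module.End.mem_eigenspace_iff]
      exact hEig i
    · exact hv0 i
  have hspan : Submodule.span ℂ (Set.range v) = ⊤ := by
    apply hli.span_eq_top_of_card_eq_finrank
    simp
  -- symmetric pairings
  have pairA : ∀ i j, v i ⬝ᵥ (A *ᵥ v j) = lam j * (v i ⬝ᵥ (B *ᵥ v j)) := by
    intro i j; rw [hAv j, dotProduct_smul, smul_eq_mul]
  have pairA' : ∀ i j, v i ⬝ᵥ (A *ᵥ v j) = lam i * (v i ⬝ᵥ (B *ᵥ v j)) := by
    intro i j
    rw [Matrix.dotProduct_mulVec, ← hAs]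
    rw [Matrix.vecMul_transpose, hAv i, smul_dotProduct, smul_eq_mul]
    congr 1
    rw [Matrix.dotProduct_mulVec, ← hBs, Matrix.vecMul_transpose]
    rw [hBs]
  have hBorth : ∀ i j, i ≠ j → v i ⬝ᵥ (B *ᵥ v j) = 0 := by
    intro i j hij
    have h := (pairA i j).symm.trans (pairA' i j)
    have : (lam j - lam i) * (v i ⬝ᵥ (B *ᵥ v j)) = 0 := by ring_nf; linear_combination h
    rcases mul_eq_zero.1 this with h' | h'
    · exact absurd (hinj (sub_eq_zero.1 h')) (fun e => hij e.symm)
    · exact h'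
  have horth : ∀ i j, i ≠ j → v i ⬝ᵥ (A *ᵥ v j) = 0 ∧ v i ⬝ᵥ (B *ᵥ v j) = 0 := by
    intro i j hij
    exact ⟨by rw [pairA i j, hBorth i j hij, mul_zero], hBorth i j hij⟩
  -- nonzero self B-pairing
  have hBself : ∀ i, v i ⬝ᵥ (B *ᵥ v i) ≠ 0 := by
    intro i h0
    have hw : ∀ j, v j ⬝ᵥ (B *ᵥ v i) = 0 := by
      intro j
      by_cases hji : j = i
      · subst hji; exact h0
      · exact hBorth j i hji
    have hall : ∀ x : Fin (n+1) → ℂ, x ⬝ᵥ (B *ᵥ v i) = 0 := by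
      intro x
      have hx : x ∈ Submodule.span ℂ (Set.range v) := hspan ▸ Submodule.mem_top
      induction hx using Submodule.span_induction with
      | mem y hy => obtain ⟨j, rfl⟩ := hy; exact hw j
      | zero => simp
      | add a b _ _ ha hb => rw [add_dotProduct, ha, hb, add_zero]
      | smul c a _ ha => rw [smul_dotProduct, ha, smul_zero]
    have hBv : B *ᵥ v i = 0 := by
      funext k
      have := hall (Pi.single k 1)
      simpa [dotProduct, Pi.single_apply] using this
    have : v i = 0 := by
      have hinjB := Matrix.mulVec_injective_iff_isUnit.2 hBu
      have : B *ᵥ v i = B *ᵥ 0 := by simpa using hBv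
      exact hinjB this
    exact hv0 i this
  have hself : ∀ i, v i ⬝ᵥ (A *ᵥ v i) ≠ 0 ∧ v i ⬝ᵥ (B *ᵥ v i) ≠ 0 := by
    intro i
    refine ⟨?_, hBself i⟩
    rw [pairA i i]
    exact mul_ne_zero (hlam0 i) (hBself i)
  -- matrix P
  set P : Matrix (Fin (n+1)) (Fin (n+1)) ℂ := Matrix.of fun i j => v j i with hP
  have hPu : IsUnit P.det := by
    rw [← Matrix.isUnit_iff_isUnit_det]
    have : LinearIndependent ℂ (fun i => Pᵀ i) := by
      convert hli using 1
      rfl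
    exact Matrix.linearIndependent_cols_iff_isUnit.1 this
  have hentry : ∀ (M : Matrix (Fin (n+1)) (Fin (n+1)) ℂ) i j,
      (Pᵀ * M * P) i j = v i ⬝ᵥ (M *ᵥ v j) := by
    intro M i j
    simp only [hP, Matrix.mul_apply, Matrix.mulVec, dotProduct, Finset.sum_mul,
      Finset.mul_sum, Matrix.transpose_apply, Matrix.of_apply]
    rw [Finset.sum_comm]
    exact Finset.sum_congr rfl fun k _ => Finset.sum_congr rfl fun l _ => by ring
  refine ⟨hli, hspan, horth, hself, hPu, ?_, ?_, ?_, ?_⟩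
  · intro i j hij; rw [hentry A i j]; exact (horth i j hij).1
  · intro i j hij; rw [hentry B i j]; exact (horth i j hij).2
  · intro i; rw [hentry A i i]; exact (hself i).1
  · intro i; rw [hentry B i i]; exact (hself i).2
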